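/- Let A ∈ ℂ^{m×n}, b ∈ ℂ^m, μ > 0. Then strong duality holds between the nonnegative unconstrained basis pursuit denoising problem and its dual: the minimum over real x ∈ ℝ^n with x ≥ 0 of Σᵢ xᵢ + (1/(2μ))‖A x − b‖₂² equals the maximum over y ∈ ℂ^m satisfying Re((A*y)ᵢ) ≤ 1 for all i of Re(b*y) − (μ/2)‖y‖₂², and both the minimum and the maximum are attained. -/

import Mathlib

open Filter Topology Matrix Finset

noncomputable def l1 {ι : Type*} [Fintype ι] (v : ι → ℂ) : ℝ := ∑ i, ‖v i‖

noncomputable def l2sq {ι : Type*} [Fintype ι] (v : ι → ℂ) : ℝ := ∑ i, (‖v i‖)^2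

noncomputable def l2 {ι : Type*} [Fintype ι] (v : ι → ℂ) : ℝ := Real.sqrt (l2sq v)

noncomputable def linf {ι : Type*} [Fintype ι] (v : ι → ℂ) : ℝ := ⨆ i, ‖v i‖

noncomputable def csign (w : ℂ) : ℂ := if w = 0 then 0 else w / ((‖w‖ : ℝ) : ℂ)

noncomputable def shrink {ι : Type*} [Fintype ι] (z : ι → ℂ) (ν : ℝ) : ι → ℂ :=
  fun i => ((max (‖z i‖ - ν) 0 : ℝ) : ℂ) * csign (z i)

noncomputable def reInner {ι : Type*} [Fintype ι] (y v : ι → ℂ) : ℝ :=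
  (∑ i, (starRingEnd ℂ) (y i) * v i).re

noncomputable def projBall {ι : Type*} [Fintype ι] (t : ℝ) (v : ι → ℂ) : ι → ℂ :=
  if l2 v ≤ t then v else (t / l2 v) • v

noncomputable def projBox {ι : Type*} [Fintype ι] (v : ι → ℂ) : ι → ℂ :=
  fun i => if ‖v i‖ ≤ 1 then v i else v i / ((‖v i‖ : ℝ) : ℂ)

noncomputable def lmax {m n : ℕ} (A : Matrix (Fin m) (Fin n) ℂ) : ℝ :=
  ⨆ i, (Matrix.isHermitian_conjTranspose_mul_self A).eigenvalues i

section Aux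

variable {ι : Type*} [Fintype ι]

lemma l2sq_eq (v : ι → ℂ) : l2sq v = ∑ i, Complex.normSq (v i) := by
  simp [l2sq, Complex.sq_norm]

lemma l2sq_nonneg (v : ι → ℂ) : 0 ≤ l2sq v :=
  Finset.sum_nonneg fun i _ => sq_nonneg _

lemma l2sq_add_smul (r u : ι → ℂ) (t : ℝ) :
    l2sq (fun j => r j + (t:ℂ) * u j)
      = l2sq r + 2*t*(∑ j, (starRingEnd ℂ) (u j) * r j).re + t^2 * l2sq u := by
  have h : ∀ j, Complex.normSq (r j + (t:ℂ) * u j)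
      = Complex.normSq (r j) + 2*t*((starRingEnd ℂ) (u j) * r j).re
        + t^2 * Complex.normSq (u j) := by
    intro j
    rw [Complex.normSq_add]
    have h1 : Complex.normSq ((t:ℂ) * u j) = t^2 * Complex.normSq (u j) := by
      simp [Complex.normSq_mul, Complex.normSq_ofReal, sq]
    have h2 : (r j * (starRingEnd ℂ) ((t:ℂ) * u j)).re
        = t * ((starRingEnd ℂ) (u j) * r j).re := by
      simp [Complex.mul_re, Complex.conj_re, Complex.conj_im]
      ring
    rw [h1, h2]; ring
  simp only [l2sq_eq, h, Finset.sum_add_distrib, Complex.re_sum, Finset.mul_sum]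

end Aux

variable {m n : ℕ}

/-- real inner product with A x expressed through Aᴴ y -/
lemma reInner_mulVec (A : Matrix (Fin m) (Fin n) ℂ) (x : Fin n → ℝ) (y : Fin m → ℂ) :
    (∑ j, (starRingEnd ℂ) (y j) * (A.mulVec (fun i => (x i : ℂ))) j).re
      = ∑ i, x i * ((Aᴴ.mulVec y) i).re := by
  simp only [Matrix.mulVec, dotProduct, Matrix.conjTranspose_apply, Finset.mul_sum,
    Complex.re_sum]
  rw [Finset.sum_comm]
  refine Finset.sum_congr rfl fun i _ => Finset.sum_congr rfl fun j _ => ?_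
  simp [Complex.mul_re, Complex.conj_re, Complex.conj_im]
  ring

/-- The key algebraic identity behind strong duality. -/
lemma key_identity (A : Matrix (Fin m) (Fin n) ℂ) (b : Fin m → ℂ) (μ : ℝ) (hμ : 0 < μ)
    (x : Fin n → ℝ) (y : Fin m → ℂ) :
    ((∑ i, x i) + (1/(2*μ)) * l2sq (A.mulVec (fun i => (x i : ℂ)) - b))
      - (reInner b y - (μ/2) * l2sq y)
    = (∑ i, x i * (1 - ((Aᴴ.mulVec y) i).re))
      + (1/(2*μ)) * l2sq (fun j => (A.mulVec (fun i => (x i : ℂ)) - b) j + (μ:ℂ) * y j) := by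
  set r : Fin m → ℂ := A.mulVec (fun i => (x i : ℂ)) - b with hr
  have hexp := l2sq_add_smul r y μ
  have hSr : (∑ j, (starRingEnd ℂ) (y j) * r j).re
      = (∑ i, x i * ((Aᴴ.mulVec y) i).re) - reInner b y := by
    have : ∀ j, (starRingEnd ℂ) (y j) * r j
        = (starRingEnd ℂ) (y j) * (A.mulVec (fun i => (x i : ℂ))) j
          - (starRingEnd ℂ) (y j) * b j := by
      intro j; simp [hr]; ring
    rw [Finset.sum_congr rfl fun j _ => this j, Finset.sum_sub_distrib, Complex.sub_re,
      reInner_mulVec A x y]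
    have : (∑ j, (starRingEnd ℂ) (y j) * b j).re = reInner b y := by
      unfold reInner
      rw [Complex.re_sum, Complex.re_sum]
      congr 1; ext j
      simp [Complex.mul_re, Complex.conj_re, Complex.conj_im]; ring
    rw [this]
  have hμ' : μ ≠ 0 := ne_of_gt hμ
  rw [hexp, hSr]
  simp only [mul_sub, mul_one, Finset.sum_sub_distrib]
  field_simp
  ring

lemma P_perturb (A : Matrix (Fin m) (Fin n) ℂ) (b : Fin m → ℂ) (μ : ℝ) (hμ : 0 < μ)
    (x : Fin n → ℝ) (i : Fin n) (t : ℝ) :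
    (∑ k, (x + t • (Pi.single i 1 : Fin n → ℝ)) k)
      + (1/(2*μ)) * l2sq (A.mulVec (fun k => (((x + t • (Pi.single i 1 : Fin n → ℝ)) k) : ℂ)) - b)
    = ((∑ k, x k) + (1/(2*μ)) * l2sq (A.mulVec (fun k => (x k : ℂ)) - b))
      + t * (1 + μ⁻¹ * (∑ j, (starRingEnd ℂ) (A j i)
          * ((A.mulVec (fun k => (x k : ℂ)) - b) j)).re)
      + t^2 * (l2sq (fun j => A j i) * (1/(2*μ))) := by
  have hμ' : μ ≠ 0 := ne_of_gt hμ
  have hsum : (∑ k, (x + t • (Pi.single i 1 : Fin n → ℝ)) k) = (∑ k, x k) + t := by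
    simp [Finset.sum_add_distrib, Pi.single_apply, mul_ite, Finset.sum_ite_eq']
  have hv : (A.mulVec (fun k => (((x + t • (Pi.single i 1 : Fin n → ℝ)) k) : ℂ)) - b)
      = fun j => (A.mulVec (fun k => (x k : ℂ)) - b) j + (t:ℂ) * (fun j => A j i) j := by
    funext j
    simp only [Pi.sub_apply, Pi.add_apply, Pi.smul_apply, smul_eq_mul, Pi.single_apply,
      Matrix.mulVec, dotProduct]
    push_cast
    simp only [mul_add, Finset.sum_add_distrib, apply_ite Complex.ofReal,
      Complex.ofReal_one, Complex.ofReal_zero, mul_ite, mul_one, mul_zero,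
      Finset.sum_ite_eq', Finset.mem_univ, if_true]
    ring
  rw [hsum, hv, l2sq_add_smul]
  field_simp
  ring

lemma exists_min (f : (Fin n → ℝ) → ℝ) (hf : Continuous f)
    (hlb : ∀ x : Fin n → ℝ, (∀ i, 0 ≤ x i) → ∑ i, x i ≤ f x) :
    ∃ xt : Fin n → ℝ, (∀ i, 0 ≤ xt i) ∧ ∀ x : Fin n → ℝ, (∀ i, 0 ≤ x i) → f xt ≤ f x := by
  set M := f 0 with hM
  set K : Set (Fin n → ℝ) := {x | (∀ i, 0 ≤ x i) ∧ ∑ i, x i ≤ M} with hK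
  have h0K : (0 : Fin n → ℝ) ∈ K := by
    refine ⟨fun i => le_refl 0, ?_⟩
    simpa using hlb 0 (fun i => le_rfl)
  have hKsub : K ⊆ Set.Icc (0 : Fin n → ℝ) (fun _ => M) := by
    intro x hx
    refine ⟨fun i => hx.1 i, fun i => ?_⟩
    calc x i ≤ ∑ k, x k := Finset.single_le_sum (fun k _ => hx.1 k) (Finset.mem_univ i)
    _ ≤ M := hx.2
  have hKclosed : IsClosed K := by
    have : K = (⋂ i, {x : Fin n → ℝ | 0 ≤ x i}) ∩ {x | ∑ i, x i ≤ M} := by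
      ext x; simp [hK, Set.mem_iInter]
    rw [this]
    exact (isClosed_iInter fun i => isClosed_le continuous_const (continuous_apply i)).inter
      (isClosed_le (continuous_finset_sum _ fun i _ => continuous_apply i) continuous_const)
  have hKcpt : IsCompact K := (isCompact_Icc).of_isClosed_subset hKclosed hKsub
  obtain ⟨xt, hxtK, hmin⟩ := hKcpt.exists_isMinOn ⟨0, h0K⟩ hf.continuousOn
  refine ⟨xt, hxtK.1, fun x hx => ?_⟩
  by_cases hxK : x ∈ K
  · exact hmin hxK
  · have hlt : M < ∑ i, x i := by
      by_contra h
      push_neg at h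
      exact hxK ⟨hx, h⟩
    calc f xt ≤ f 0 := hmin h0K
    _ = M := rfl
    _ ≤ ∑ i, x i := le_of_lt hlt
    _ ≤ f x := hlb x hx

/-- Strong duality between the nonnegative QP_mu model (2.35) and its dual (2.36),
both optima attained. -/
theorem strong_duality_qp_nonneg {m n : ℕ} (A : Matrix (Fin m) (Fin n) ℂ)
    (b : Fin m → ℂ) (μ : ℝ) (hμ : 0 < μ) :
    let P : (Fin n → ℝ) → ℝ := fun x =>
      (∑ i, x i) + (1/(2*μ)) * l2sq (A.mulVec (fun i => (x i : ℂ)) - b)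
    let D : (Fin m → ℂ) → ℝ := fun y => reInner b y - (μ/2) * l2sq y
    ∃ (xt : Fin n → ℝ) (yt : Fin m → ℂ),
      (∀ i, 0 ≤ xt i) ∧
      (∀ i, ((Aᴴ.mulVec yt) i).re ≤ 1) ∧
      (∀ x : Fin n → ℝ, (∀ i, 0 ≤ x i) → P xt ≤ P x) ∧
      (∀ y : Fin m → ℂ, (∀ i, ((Aᴴ.mulVec y) i).re ≤ 1) → D y ≤ D yt) ∧
      P xt = D yt := by
  intro P D
  unfold P D
  beta_reduce
  have hμ' : μ ≠ 0 := ne_of_gt hμ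
  -- continuity of the primal objective
  have hPc : Continuous (fun x : Fin n → ℝ =>
      (∑ i, x i) + (1/(2*μ)) * l2sq (A.mulVec (fun i => (x i : ℂ)) - b)) := by
    apply Continuous.add (continuous_finset_sum _ fun i _ => continuous_apply i)
    apply continuous_const.mul
    unfold l2sq
    apply continuous_finset_sum
    intro j _
    apply Continuous.pow
    apply continuous_norm.comp
    have : (fun x : Fin n → ℝ => (A.mulVec (fun i => ((x i : ℂ))) - b) j)
        = fun x : Fin n → ℝ => (∑ k, A j k * ((x k : ℂ))) - b j := by
      funext x; simp [Matrix.mulVec, dotProduct]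
    rw [this]
    exact Continuous.sub (continuous_finset_sum _ fun k _ =>
      continuous_const.mul (Complex.continuous_ofReal.comp (continuous_apply k)))
      continuous_const
  have hlb : ∀ x : Fin n → ℝ, (∀ i, 0 ≤ x i) →
      ∑ i, x i ≤ (∑ i, x i) + (1/(2*μ)) * l2sq (A.mulVec (fun i => (x i : ℂ)) - b) := by
    intro x _
    exact le_add_of_nonneg_right (mul_nonneg (by positivity)
      (l2sq_nonneg (A.mulVec (fun i => (x i : ℂ)) - b)))
  obtain ⟨xt, hxt0, hmin⟩ := exists_min _ hPc hlb
  set r : Fin m → ℂ := A.mulVec (fun k => (xt k : ℂ)) - b with hr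
  set S : Fin n → ℝ := fun i => (∑ j, (starRingEnd ℂ) (A j i) * r j).re with hS
  set c : Fin n → ℝ := fun i => 1 + μ⁻¹ * S i with hc
  set q : Fin n → ℝ := fun i => l2sq (fun j => A j i) * (1/(2*μ)) with hq
  have hq0 : ∀ i, 0 ≤ q i := fun i => mul_nonneg (l2sq_nonneg _) (by positivity)
  clear_value r S c q
  have hkey : ∀ (i : Fin n) (t : ℝ), -(xt i) ≤ t → 0 ≤ t * c i + t^2 * q i := by
    intro i t ht
    have hfeas : ∀ k, 0 ≤ (xt + t • (Pi.single i 1 : Fin n → ℝ)) k := by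
      intro k
      by_cases hk : k = i
      · subst hk
        simp only [Pi.add_apply, Pi.smul_apply, Pi.single_eq_same, smul_eq_mul, mul_one]
        linarith
      · simp only [Pi.add_apply, Pi.smul_apply, Pi.single_apply, hk, if_false, smul_eq_mul,
          mul_zero, add_zero]
        exact hxt0 k
    have h2 := hmin _ hfeas
    rw [P_perturb A b μ hμ xt i t] at h2
    rw [← hr] at h2
    rw [hc, hq, hS]
    simp only []
    linarith [h2]
  have hcpos : ∀ i, 0 ≤ c i := by
    intro i
    by_contra h
    push_neg at h
    obtain ⟨t, htdef⟩ : ∃ t : ℝ, t = -(c i)/(2*(q i + 1)) := ⟨_, rfl⟩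
    have ht0 : 0 < t := by
      rw [htdef]; exact div_pos (by linarith) (by linarith [hq0 i])
    have hkey' := hkey i t (le_trans (neg_nonpos.mpr (hxt0 i)) ht0.le)
    have hq1 : (0:ℝ) < q i + 1 := by linarith [hq0 i]
    have hid : t * (q i + 1) = -(c i)/2 := by
      rw [htdef, div_mul_eq_mul_div, mul_div_mul_right _ _ (ne_of_gt hq1)]
    have h3 : t * q i = -(c i)/2 - t := by nlinarith [hid]
    have h5 : t^2 * q i = -(t * c i)/2 - t^2 := by
      have : t^2 * q i = t * (t * q i) := by ring
      rw [this, h3]; ring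
    have h6 : t * c i < 0 := mul_neg_of_pos_of_neg ht0 h
    have h7 : 0 < t^2 := pow_pos ht0 2
    linarith
  have hcs : ∀ i, xt i * c i = 0 := by
    intro i
    rcases eq_or_lt_of_le (hxt0 i) with h0 | hpos
    · rw [← h0, zero_mul]
    · have hcle : c i ≤ 0 := by
        by_contra h
        push_neg at h
        obtain ⟨δ, hδdef⟩ : ∃ δ : ℝ, δ = min (xt i) (c i/(2*(q i + 1))) := ⟨_, rfl⟩
        have hδ0 : 0 < δ := by
          rw [hδdef]; exact lt_min hpos (div_pos h (by linarith [hq0 i]))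
        have hδle : δ ≤ xt i := hδdef ▸ min_le_left _ _
        have hkey' := hkey i (-δ) (by linarith)
        have h3 : c i ≤ δ * q i := by nlinarith [hkey', hδ0]
        have hδ2 : δ ≤ c i/(2*(q i + 1)) := hδdef ▸ min_le_right _ _
        have h5 : δ * (2*(q i + 1)) ≤ c i :=
          (le_div_iff₀ (by linarith [hq0 i])).mp hδ2
        have h6 : 2*(δ * q i) + 2*δ ≤ c i := by nlinarith [h5]
        linarith
      exact mul_eq_zero_of_right _ (le_antisymm hcle (hcpos i))
  set yt : Fin m → ℂ := fun j => ((μ⁻¹ : ℝ) : ℂ) * (-(r j)) with hyt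
  have hAyt : ∀ i, ((Aᴴ.mulVec yt) i).re = -(μ⁻¹ * S i) := by
    intro i
    have h1 : (Aᴴ.mulVec yt) i
        = ((μ⁻¹ : ℝ) : ℂ) * (-(∑ j, (starRingEnd ℂ) (A j i) * r j)) := by
      show ∑ j, Aᴴ i j * yt j = _
      calc ∑ j, Aᴴ i j * yt j
          = ∑ j, ((μ⁻¹ : ℝ) : ℂ) * (-((starRingEnd ℂ) (A j i) * r j)) := by
            refine Finset.sum_congr rfl fun j _ => ?_
            simp only [Matrix.conjTranspose_apply, hyt, starRingEnd_apply]
            ring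
        _ = _ := by rw [← Finset.mul_sum, Finset.sum_neg_distrib]
    rw [h1, Complex.re_ofReal_mul, Complex.neg_re]
    rw [hS]
    ring
  have hfeas_yt : ∀ i, ((Aᴴ.mulVec yt) i).re ≤ 1 := by
    intro i
    rw [hAyt i]
    have := hcpos i
    rw [hc] at this
    simp only [] at this
    linarith
  have hμc : (μ:ℂ) ≠ 0 := by exact_mod_cast hμ'
  have hz : (fun j => r j + (μ:ℂ) * yt j) = fun _ => (0:ℂ) := by
    funext j
    simp only [hyt]
    push_cast
    field_simp
    ring
  have hsum0 : ∑ i, xt i * (1 - ((Aᴴ.mulVec yt) i).re) = 0 := by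
    refine Finset.sum_eq_zero fun i _ => ?_
    rw [hAyt i, sub_neg_eq_add]
    have := hcs i
    rw [hc] at this
    simpa using this
  have hid := key_identity A b μ hμ xt yt
  rw [← hr] at hid
  rw [hz, hsum0] at hid
  have hl2sq0 : l2sq (fun _ : Fin m => (0:ℂ)) = 0 := by simp [l2sq]
  rw [hl2sq0] at hid
  simp only [mul_zero, add_zero, zero_add] at hid
  -- hid : P xt - D yt = 0
  refine ⟨xt, yt, hxt0, hfeas_yt, fun x hx => ?_, fun y hy => ?_, ?_⟩
  · rw [← hr]
    exact hmin x hx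
  · have hid2 := key_identity A b μ hμ xt y
    rw [← hr] at hid2
    have h1 : 0 ≤ ∑ i, xt i * (1 - ((Aᴴ.mulVec y) i).re) :=
      Finset.sum_nonneg fun i _ => mul_nonneg (hxt0 i) (by linarith [hy i])
    have h2 : 0 ≤ (1/(2*μ)) * l2sq (fun j => r j + (μ:ℂ) * y j) :=
      mul_nonneg (by positivity) (l2sq_nonneg _)
    linarith [hid2, hid]
  · rw [← hr]
    linarith [hid]
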